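/- Let (C^1, …, C^k) be an admissible family in ℝ^n and let Q(C^1,…,C^k) := conv(⋃_{i=1}^k C^i × {e^i}) ⊆ ℝ^n × ℝ^k. Then Q(C^1,…,C^k) is a closed convex set and rec(Q(C^1,…,C^k)) = {(x, y) ∈ ℝ^n × ℝ^k : x ∈ rec(C^1), y = 0}. -/

import Mathlib

open Pointwise Set

noncomputable section

/-- The recession cone of a set. -/
def recCone {E : Type*} [AddCommGroup E] [Module ℝ E] (S : Set E) : Set E :=
  {d | ∀ x ∈ S, ∀ t : ℝ, 0 ≤ t → x + t • d ∈ S}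

/-- An admissible family: each member is a nonempty closed convex set and all members share
the same recession cone. -/
def Admissible {n k : ℕ} (C : Fin k → Set (Fin n → ℝ)) : Prop :=
  (∀ i, (C i).Nonempty) ∧ (∀ i, IsClosed (C i)) ∧ (∀ i, Convex ℝ (C i)) ∧
    ∀ i j, recCone (C i) = recCone (C j)

/-- The Cayley embedding `Q(C¹,…,Cᵏ) = conv(⋃ᵢ Cⁱ × {eⁱ})`. -/
def CayleyQ {n k : ℕ} (C : Fin k → Set (Fin n → ℝ)) :
    Set ((Fin n → ℝ) × (Fin k → ℝ)) :=
  convexHull ℝ (⋃ i, (C i) ×ˢ ({Pi.single i 1} : Set (Fin k → ℝ)))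

open Filter Topology Bornology

set_option maxHeartbeats 1000000

section Mod
variable {E : Type*} [AddCommGroup E] [Module ℝ E] {S : Set E}

lemma recCone.zero_mem : (0 : E) ∈ recCone S := by
  intro x hx t ht; simpa using hx

lemma recCone.smul_mem {d : E} (hd : d ∈ recCone S) {t : ℝ} (ht : 0 ≤ t) :
    t • d ∈ recCone S := by
  intro x hx s hs
  rw [smul_smul]
  exact hd x hx (s * t) (mul_nonneg hs ht)

lemma recCone.add_mem {d d' : E} (hd : d ∈ recCone S) (hd' : d' ∈ recCone S) :
    d + d' ∈ recCone S := by
  intro x hx t ht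
  rw [smul_add, ← add_assoc]
  exact hd' _ (hd x hx t ht) t ht

lemma recCone.sum_mem {ι : Type*} (s : Finset ι) {d : ι → E}
    (hd : ∀ i ∈ s, d i ∈ recCone S) : (∑ i ∈ s, d i) ∈ recCone S := by
  classical
  induction s using Finset.induction with
  | empty => simpa using recCone.zero_mem
  | insert _ _ hni ih =>
    rw [Finset.sum_insert hni]
    exact recCone.add_mem (hd _ (Finset.mem_insert_self _ _))
      (ih fun i hi => hd i (Finset.mem_insert_of_mem hi))

lemma add_mem_of_recCone {x d : E} (hx : x ∈ S) (hd : d ∈ recCone S) : x + d ∈ S := by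
  simpa using hd x hx 1 zero_le_one

end Mod

section NS
variable {E : Type*} [NormedAddCommGroup E] [NormedSpace ℝ E] {S : Set E}

/-- Lemma A: limits of `tₘ • cₘ` with `cₘ ∈ S`, `tₘ → 0⁺` are recession directions. -/
lemma recCone.of_tendsto (hScl : IsClosed S) (hScv : Convex ℝ S)
    {c : ℕ → E} (hc : ∀ m, c m ∈ S) {t : ℕ → ℝ} (ht0 : ∀ m, 0 ≤ t m)
    (htlim : Tendsto t atTop (𝓝 0)) {w : E}
    (hw : Tendsto (fun m => t m • c m) atTop (𝓝 w)) : w ∈ recCone S := by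
  intro x hx s hs
  rcases eq_or_lt_of_le hs with rfl | hs
  · simpa using hx
  have hev : ∀ᶠ m in atTop, s * t m ≤ 1 := by
    have : Tendsto (fun m => s * t m) atTop (𝓝 (s * 0)) := htlim.const_mul s
    rw [mul_zero] at this
    exact this.eventually_le_const one_pos
  have hmem : ∀ᶠ m in atTop, (1 - s * t m) • x + s • (t m • c m) ∈ S := by
    filter_upwards [hev] with m hm
    have h1 : s • (t m • c m) = (s * t m) • c m := by rw [smul_smul]
    rw [h1]
    exact hScv hx (hc m) (by linarith [mul_nonneg hs.le (ht0 m)]) (mul_nonneg hs.le (ht0 m)) (by ring)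
  have hlim : Tendsto (fun m => (1 - s * t m) • x + s • (t m • c m)) atTop (𝓝 (x + s • w)) := by
    have h1 : Tendsto (fun m => (1 - s * t m : ℝ)) atTop (𝓝 1) := by
      have := (htlim.const_mul s).const_sub 1
      simpa using this
    have := (h1.smul tendsto_const_nhds (f := fun m => (1 - s * t m : ℝ)) (g := fun _ => x)).add
      (hw.const_smul s)
    simpa using this
  exact hScl.mem_of_tendsto hlim (hmem.mono fun m hm => hm)

/-- Lemma W: one witness ray suffices for closed convex sets. -/
lemma recCone.of_witness (hScl : IsClosed S) (hScv : Convex ℝ S) {x d : E}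
    (hx : x ∈ S) (hray : ∀ t : ℝ, 0 ≤ t → x + t • d ∈ S) : d ∈ recCone S := by
  have hc : ∀ m : ℕ, x + (m : ℝ) • d ∈ S := fun m => hray m (by positivity)
  refine recCone.of_tendsto hScl hScv (c := fun m => x + (m+1 : ℝ) • d)
    (fun m => hray _ (by positivity)) (t := fun m => (m+1 : ℝ)⁻¹)
    (fun m => by positivity) ?_ ?_
  · exact tendsto_one_div_add_atTop_nhds_zero_nat.congr (by intro m; simp [one_div])
  · have : (fun m : ℕ => ((m:ℝ)+1)⁻¹ • (x + ((m:ℝ)+1) • d)) =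
        fun m : ℕ => ((m:ℝ)+1)⁻¹ • x + d := by
      funext m
      have hne : ((m:ℝ)+1) ≠ 0 := by positivity
      rw [smul_add, smul_smul, inv_mul_cancel₀ hne, one_smul]
    rw [this]
    have h1 : Tendsto (fun m : ℕ => ((m:ℝ)+1)⁻¹ • x) atTop (𝓝 0) := by
      have := (tendsto_one_div_add_atTop_nhds_zero_nat (𝕜 := ℝ)).smul (tendsto_const_nhds (x := x))
      simpa [one_div] using this
    simpa using h1.add (tendsto_const_nhds (x := d))

end NS


def Mset {E : Type*} [AddCommGroup E] [Module ℝ E] {k : ℕ} (C : Fin k → Set E) :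
    Set (E × (Fin k → ℝ)) :=
  {p | (∀ i, 0 ≤ p.2 i) ∧ ∑ i, p.2 i = 1 ∧
    ∃ c : Fin k → E, (∀ i, c i ∈ C i) ∧ p.1 = ∑ i, p.2 i • c i}

section MsetSec
variable {E : Type*} [NormedAddCommGroup E] [NormedSpace ℝ E] {k : ℕ}

lemma Mset_convex (C : Fin k → Set E) (hcv : ∀ i, Convex ℝ (C i)) :
    Convex ℝ (Mset C) := by
  rintro ⟨x, lam⟩ ⟨hlam0, hlam1, c, hc, hx⟩ ⟨y, mu⟩ ⟨hmu0, hmu1, d, hd, hy⟩ a b ha hb hab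
  classical
  dsimp only at hlam0 hlam1 hx hmu0 hmu1 hy
  have h2 : (a • (x, lam) + b • (y, mu)).2 = fun i => a * lam i + b * mu i := rfl
  have h1 : (a • (x, lam) + b • (y, mu)).1 = a • x + b • y := rfl
  have hnunn : ∀ i, 0 ≤ a * lam i + b * mu i := fun i =>
    add_nonneg (mul_nonneg ha (hlam0 i)) (mul_nonneg hb (hmu0 i))
  refine ⟨fun i => by rw [h2]; exact hnunn i, ?_, ?_⟩
  · rw [h2, Finset.sum_add_distrib, ← Finset.mul_sum, ← Finset.mul_sum, hlam1, hmu1]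
    simpa using hab
  · set nu : Fin k → ℝ := fun i => a * lam i + b * mu i with hnu
    refine ⟨fun i => if h : nu i = 0 then c i
      else (nu i)⁻¹ • ((a * lam i) • c i + (b * mu i) • d i), fun i => ?_, ?_⟩
    · by_cases h : nu i = 0
      · simp only [h, dif_pos]; exact hc i
      · simp only [dif_neg h]
        have hpos : 0 < nu i := lt_of_le_of_ne (hnunn i) (Ne.symm h)
        have hmem := (hcv i) (hc i) (hd i)
          (div_nonneg (mul_nonneg ha (hlam0 i)) hpos.le)
          (div_nonneg (mul_nonneg hb (hmu0 i)) hpos.le)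
          (by field_simp; rfl)
        have heq : (nu i)⁻¹ • ((a * lam i) • c i + (b * mu i) • d i) =
            (a * lam i / nu i) • c i + (b * mu i / nu i) • d i := by
          rw [smul_add, smul_smul, smul_smul, div_eq_inv_mul, div_eq_inv_mul]
        rw [heq]; exact hmem
    · rw [h1, h2, hx, hy, Finset.smul_sum, Finset.smul_sum, ← Finset.sum_add_distrib]
      refine Finset.sum_congr rfl fun i _ => ?_
      by_cases h : nu i = 0
      · have ha0 : a * lam i = 0 := by
          have := hnunn i
          have h1' : 0 ≤ a * lam i := mul_nonneg ha (hlam0 i)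
          have h2' : 0 ≤ b * mu i := mul_nonneg hb (hmu0 i)
          have : a * lam i + b * mu i = 0 := h
          linarith
        have hb0 : b * mu i = 0 := by
          have h1' : 0 ≤ a * lam i := mul_nonneg ha (hlam0 i)
          have h2' : 0 ≤ b * mu i := mul_nonneg hb (hmu0 i)
          have : a * lam i + b * mu i = 0 := h
          linarith
        simp only [dif_pos h]
        rw [smul_smul, smul_smul, ha0, hb0, h, zero_smul, zero_smul]
        simp
      · simp only [dif_neg h]
        rw [smul_smul (nu i), mul_inv_cancel₀ h, one_smul, smul_smul, smul_smul]

lemma Mset_subset_hull (C : Fin k → Set E) :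
    Mset C ⊆ convexHull ℝ (⋃ i, (C i) ×ˢ ({Pi.single i 1} : Set (Fin k → ℝ))) := by
  rintro ⟨x, lam⟩ ⟨hlam0, hlam1, c, hc, hx⟩
  dsimp only at hlam0 hlam1 hx
  have hmem : ∀ i : Fin k, ((c i, Pi.single i 1) : E × (Fin k → ℝ)) ∈
      convexHull ℝ (⋃ i, (C i) ×ˢ ({Pi.single i 1} : Set (Fin k → ℝ))) := by
    intro i
    apply subset_convexHull
    exact mem_iUnion.2 ⟨i, ⟨hc i, rfl⟩⟩
  have := (convex_convexHull ℝ _).sum_mem (t := Finset.univ)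
    (fun i _ => hlam0 i) (by simpa using hlam1) (fun i _ => hmem i)
  convert this using 1
  ext : 1
  · simp [hx, Prod.fst_sum]
  · simp only [Prod.snd_sum]
    funext j
    simp only [Prod.smul_mk]
    rw [Finset.sum_apply]
    simp only [Pi.smul_apply, smul_eq_mul]
    rw [Finset.sum_eq_single j]
    · simp
    · intro i _ hij; simp [Pi.single_apply, hij]
    · simp
lemma hull_subset_Mset (C : Fin k → Set E) (hcv : ∀ i, Convex ℝ (C i))
    (hne : ∀ i, (C i).Nonempty) :
    convexHull ℝ (⋃ i, (C i) ×ˢ ({Pi.single i 1} : Set (Fin k → ℝ))) ⊆ Mset C := by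
  classical
  apply convexHull_min _ (Mset_convex C hcv)
  rintro ⟨x, lam⟩ hp
  rw [mem_iUnion] at hp
  obtain ⟨i, hxi, hlam⟩ := hp
  simp only [mem_singleton_iff] at hlam
  subst hlam
  refine ⟨fun j => ?_, ?_, fun j => if h : j = i then x else (hne j).some, fun j => ?_, ?_⟩
  · rcases eq_or_ne j i with rfl | h
    · simp
    · simp [Pi.single_apply, h]
  · simp [Pi.single_apply]
  · rcases eq_or_ne j i with rfl | h
    · simpa using hxi
    · simpa [h] using (hne j).some_mem
  · rw [Finset.sum_eq_single i]
    · simp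
    · intro j _ hj; simp [Pi.single_apply, hj]
    · simp
end MsetSec


variable {E : Type*} [NormedAddCommGroup E] [NormedSpace ℝ E] [FiniteDimensional ℝ E] {k : ℕ}

lemma Mset_isClosed_pointed (C : Fin k → Set E)
    (hne : ∀ i, (C i).Nonempty) (hcl : ∀ i, IsClosed (C i)) (hcv : ∀ i, Convex ℝ (C i))
    (hrec : ∀ i j, recCone (C i) = recCone (C j))
    (Hpt : ∀ u : Fin k → E, (∀ i, u i ∈ recCone (C i)) → ∑ i, u i = 0 → u = 0) :
    IsClosed (Mset C) := by
  classical
  refine IsSeqClosed.isClosed ?_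
  intro x p hx hxp
  -- unpack the sequence data
  have hx0 : ∀ m i, 0 ≤ (x m).2 i := fun m => (hx m).1
  have hx1 : ∀ m, ∑ i, (x m).2 i = 1 := fun m => (hx m).2.1
  choose c hcC hcrep using fun m => (hx m).2.2
  set v : ℕ → Fin k → E := fun m i => (x m).2 i • c m i with hv
  have hvsum : ∀ m, (x m).1 = ∑ i, v m i := hcrep
  have hxle1 : ∀ m i, (x m).2 i ≤ 1 := by
    intro m i
    rw [← hx1 m]
    exact Finset.single_le_sum (fun j _ => hx0 m j) (Finset.mem_univ i)
  -- limits of the components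
  have hp1 : Tendsto (fun m => (x m).1) atTop (𝓝 p.1) :=
    (continuous_fst.tendsto p).comp hxp
  have hp2 : Tendsto (fun m => (x m).2) atTop (𝓝 p.2) :=
    (continuous_snd.tendsto p).comp hxp
  have hp2i : ∀ i, Tendsto (fun m => (x m).2 i) atTop (𝓝 (p.2 i)) :=
    fun i => ((continuous_apply i).tendsto _).comp hp2
  have hp20 : ∀ i, 0 ≤ p.2 i := fun i => ge_of_tendsto' (hp2i i) (fun m => hx0 m i)
  have hp21 : ∑ i, p.2 i = 1 := by
    have h1 : Tendsto (fun m => ∑ i, (x m).2 i) atTop (𝓝 (∑ i, p.2 i)) :=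
      tendsto_finset_sum _ (fun i _ => hp2i i)
    have h2 : Tendsto (fun m => ∑ i, (x m).2 i) atTop (𝓝 1) := by
      simpa [hx1] using tendsto_const_nhds (x := (1:ℝ))
    exact tendsto_nhds_unique h1 h2
  -- boundedness of the representing vectors
  have hbdd : ∃ R : ℝ, ∀ m, ‖v m‖ ≤ R := by
    by_contra hnb
    push_neg at hnb
    have hfreq : ∀ N : ℕ, ∃ᶠ l in atTop, (N : ℝ) ≤ ‖v l‖ := by
      intro N
      rw [frequently_atTop]
      intro a
      obtain ⟨l, hl⟩ := hnb ((N : ℝ) + ∑ l' ∈ Finset.range (a + 1), ‖v l'‖)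
      have hsumnn : (0:ℝ) ≤ ∑ l' ∈ Finset.range (a + 1), ‖v l'‖ :=
        Finset.sum_nonneg fun _ _ => norm_nonneg _
      refine ⟨l, ?_, by linarith⟩
      by_contra hla
      push_neg at hla
      have : ‖v l‖ ≤ ∑ l' ∈ Finset.range (a + 1), ‖v l'‖ :=
        Finset.single_le_sum (fun _ _ => norm_nonneg _)
          (Finset.mem_range.2 (by omega))
      have hN : (0:ℝ) ≤ N := Nat.cast_nonneg N
      linarith
    obtain ⟨φ, hφmono, hφ⟩ := extraction_forall_of_frequently hfreq
    set u : ℕ → Fin k → E := fun m => ‖v (φ m)‖⁻¹ • v (φ m) with hu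
    have hunorm : ∀ m, ‖u m‖ ≤ 1 := by
      intro m
      rw [hu, norm_smul]
      rcases eq_or_ne ‖v (φ m)‖ 0 with h | h
      · simp [h]
      · have : 0 < ‖v (φ m)‖ := lt_of_le_of_ne (norm_nonneg _) (Ne.symm h)
        rw [norm_inv, norm_norm, inv_mul_cancel₀ h]
    have humem : ∀ m, u m ∈ Metric.closedBall (0 : Fin k → E) 1 := by
      intro m; rw [Metric.mem_closedBall, dist_zero_right]; exact hunorm m
    obtain ⟨uu, _, ψ, hψmono, hψlim⟩ :=
      tendsto_subseq_of_bounded Metric.isBounded_closedBall humem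
    -- norm of v (φ (ψ m)) goes to infinity
    have hvbig : ∀ m : ℕ, (m:ℝ) ≤ ‖v (φ (ψ m))‖ := by
      intro m
      calc (m : ℝ) ≤ (ψ m : ℝ) := by exact_mod_cast hψmono.le_apply
      _ ≤ ‖v (φ (ψ m))‖ := hφ (ψ m)
    have hvpos : ∀ m : ℕ, 1 ≤ m → 0 < ‖v (φ (ψ m))‖ := by
      intro m hm
      have := hvbig m
      have : (1:ℝ) ≤ ‖v (φ (ψ m))‖ := le_trans (by exact_mod_cast hm) this
      linarith
    have hvinf : Tendsto (fun m => ‖v (φ (ψ m))‖) atTop atTop :=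
      tendsto_atTop_mono hvbig tendsto_natCast_atTop_atTop
    have hinv0 : Tendsto (fun m => ‖v (φ (ψ m))‖⁻¹) atTop (𝓝 0) :=
      hvinf.inv_tendsto_atTop
    -- each component of uu is a recession direction
    have humemrec : ∀ i, uu i ∈ recCone (C i) := by
      intro i
      apply recCone.of_tendsto (hcl i) (hcv i)
        (c := fun m => c (φ (ψ m)) i) (fun m => hcC _ i)
        (t := fun m => ‖v (φ (ψ m))‖⁻¹ * (x (φ (ψ m))).2 i)
        (fun m => mul_nonneg (inv_nonneg.2 (norm_nonneg _)) (hx0 _ i))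
      · apply squeeze_zero (fun m => mul_nonneg (inv_nonneg.2 (norm_nonneg _)) (hx0 _ i))
          (g := fun m => ‖v (φ (ψ m))‖⁻¹)
        · intro m
          calc ‖v (φ (ψ m))‖⁻¹ * (x (φ (ψ m))).2 i ≤ ‖v (φ (ψ m))‖⁻¹ * 1 :=
            mul_le_mul_of_nonneg_left (hxle1 _ i) (inv_nonneg.2 (norm_nonneg _))
          _ = ‖v (φ (ψ m))‖⁻¹ := mul_one _
        · exact hinv0
      · have heq : (fun m => (‖v (φ (ψ m))‖⁻¹ * (x (φ (ψ m))).2 i) • c (φ (ψ m)) i) =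
            fun m => u (ψ m) i := by
          funext m
          rw [hu]
          simp only [Pi.smul_apply]
          rw [mul_smul]
        rw [heq]
        exact ((continuous_apply i).tendsto _).comp hψlim
    -- the components sum to zero
    have husum : ∑ i, uu i = 0 := by
      have h1 : Tendsto (fun m => ∑ i, u (ψ m) i) atTop (𝓝 (∑ i, uu i)) :=
        tendsto_finset_sum _ fun i _ => ((continuous_apply i).tendsto _).comp hψlim
      have h2 : Tendsto (fun m => ∑ i, u (ψ m) i) atTop (𝓝 0) := by
        have heq : (fun m => ∑ i, u (ψ m) i) =
            fun m => ‖v (φ (ψ m))‖⁻¹ • (x (φ (ψ m))).1 := by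
          funext m
          rw [hvsum, Finset.smul_sum]
          rfl
        rw [heq]
        have := hinv0.smul (hp1.comp ((hφmono.comp hψmono).tendsto_atTop))
        simpa using this
      exact tendsto_nhds_unique h1 h2
    -- contradiction with ‖uu‖ = 1
    have hu0 : uu = 0 := Hpt uu humemrec husum
    have hnorm1 : ‖uu‖ = 1 := by
      have h1 : Tendsto (fun m => ‖u (ψ m)‖) atTop (𝓝 ‖uu‖) :=
        (continuous_norm.tendsto _).comp hψlim
      have h2 : ∀ᶠ m in atTop, ‖u (ψ m)‖ = 1 := by
        filter_upwards [eventually_ge_atTop 1] with m hm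
        have hpos := hvpos m hm
        show ‖‖v (φ (ψ m))‖⁻¹ • v (φ (ψ m))‖ = 1
        rw [norm_smul, norm_inv, norm_norm, inv_mul_cancel₀ (ne_of_gt hpos)]
      have h3 : Tendsto (fun _ : ℕ => (1:ℝ)) atTop (𝓝 ‖uu‖) :=
        Tendsto.congr' (h2.mono fun m hm => hm) h1
      exact tendsto_nhds_unique h3 tendsto_const_nhds
    rw [hu0] at hnorm1
    simp at hnorm1
  -- extraction of a convergent subsequence of representations
  obtain ⟨R, hR⟩ := hbdd
  have hvmem : ∀ m, v m ∈ Metric.closedBall (0 : Fin k → E) R := by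
    intro m; rw [Metric.mem_closedBall, dist_zero_right]; exact hR m
  obtain ⟨w, _, φ, hφmono, hφlim⟩ :=
    tendsto_subseq_of_bounded Metric.isBounded_closedBall hvmem
  have hwi : ∀ i, Tendsto (fun m => v (φ m) i) atTop (𝓝 (w i)) :=
    fun i => ((continuous_apply i).tendsto _).comp hφlim
  have hp2iφ : ∀ i, Tendsto (fun m => (x (φ m)).2 i) atTop (𝓝 (p.2 i)) :=
    fun i => (hp2i i).comp hφmono.tendsto_atTop
  -- p.1 is the sum of the limits w i
  have hp1w : p.1 = ∑ i, w i := by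
    have h1 : Tendsto (fun m => (x (φ m)).1) atTop (𝓝 p.1) :=
      hp1.comp hφmono.tendsto_atTop
    have h2 : Tendsto (fun m => (x (φ m)).1) atTop (𝓝 (∑ i, w i)) := by
      have heq : (fun m => (x (φ m)).1) = fun m => ∑ i, v (φ m) i := by
        funext m; exact hvsum (φ m)
      rw [heq]
      exact tendsto_finset_sum _ fun i _ => hwi i
    exact tendsto_nhds_unique h1 h2
  -- positive-weight components
  have hposmem : ∀ i, p.2 i ≠ 0 → (p.2 i)⁻¹ • w i ∈ C i := by
    intro i hi
    have hpos : 0 < p.2 i := lt_of_le_of_ne (hp20 i) (Ne.symm hi)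
    have hev : ∀ᶠ m in atTop, (x (φ m)).2 i ≠ 0 := by
      have hev2 : ∀ᶠ m in atTop, p.2 i / 2 < (x (φ m)).2 i :=
        (hp2iφ i).eventually (eventually_gt_nhds (by linarith))
      filter_upwards [hev2] with m hm h0
      rw [h0] at hm; linarith
    have hclim : Tendsto (fun m => ((x (φ m)).2 i)⁻¹ • v (φ m) i) atTop
        (𝓝 ((p.2 i)⁻¹ • w i)) := by
      have hinv : Tendsto (fun m => ((x (φ m)).2 i)⁻¹) atTop (𝓝 ((p.2 i)⁻¹)) :=
        (hp2iφ i).inv₀ hi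
      exact hinv.smul (hwi i)
    have hceq : ∀ᶠ m in atTop, ((x (φ m)).2 i)⁻¹ • v (φ m) i = c (φ m) i := by
      filter_upwards [hev] with m hm
      rw [hv]
      simp only []
      rw [smul_smul, inv_mul_cancel₀ hm, one_smul]
    exact (hcl i).mem_of_tendsto (hclim.congr' hceq) (Eventually.of_forall fun m => hcC _ i)
  -- zero-weight components are recession directions
  have hzerorec : ∀ i, p.2 i = 0 → w i ∈ recCone (C i) := by
    intro i hi
    apply recCone.of_tendsto (hcl i) (hcv i) (c := fun m => c (φ m) i) (fun m => hcC _ i)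
      (t := fun m => (x (φ m)).2 i) (fun m => hx0 _ i)
    · rw [← hi]; exact hp2iφ i
    · exact hwi i
  -- pick an index with positive weight
  have hj : ∃ j, p.2 j ≠ 0 := by
    by_contra hno
    push_neg at hno
    rw [Finset.sum_congr rfl fun i _ => hno i] at hp21
    simp at hp21
  obtain ⟨j, hj⟩ := hj
  -- assemble the limit representation
  set S : E := ∑ i ∈ Finset.univ.filter (fun i' => p.2 i' = 0), w i with hS
  set c' : Fin k → E := fun i =>
    if h0 : p.2 i = 0 then (hne i).some
    else if i = j then (p.2 j)⁻¹ • (w j + S)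
    else (p.2 i)⁻¹ • w i with hc'
  refine ⟨hp20, hp21, c', fun i => ?_, ?_⟩
  · by_cases h0 : p.2 i = 0
    · simp only [hc', dif_pos h0]; exact (hne i).some_mem
    · by_cases hij : i = j
      · subst hij
        simp only [hc', dif_neg h0, if_pos rfl]
        rw [smul_add]
        apply add_mem_of_recCone (hposmem i h0)
        apply recCone.smul_mem _ (inv_nonneg.2 (hp20 i))
        apply recCone.sum_mem
        intro i' hi'
        rw [Finset.mem_filter] at hi'
        rw [hrec i i'] -- recCone (C i) = recCone (C i')
        exact hzerorec i' hi'.2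
      · simp only [hc', dif_neg h0, if_neg hij]; exact hposmem i h0
  · rw [hp1w]
    have hterm : ∀ i, p.2 i • c' i =
        (if p.2 i = 0 then 0 else w i) + (if i = j then S else 0) := by
      intro i
      by_cases h0 : p.2 i = 0
      · have hij : i ≠ j := fun h => hj (h ▸ h0)
        rw [if_pos h0, if_neg hij, h0, zero_smul, add_zero]
      · by_cases hij : i = j
        · subst hij
          simp only [hc', dif_neg h0, eq_self_iff_true, if_true, if_neg h0]
          rw [smul_smul, mul_inv_cancel₀ h0, one_smul]
        · simp only [hc', dif_neg h0, if_neg hij, if_neg h0]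
          rw [smul_smul, mul_inv_cancel₀ h0, one_smul, add_zero]
    rw [Finset.sum_congr rfl fun i _ => hterm i, Finset.sum_add_distrib]
    have h1 : ∑ i, (if i = j then S else 0 : E) = S :=
      (Finset.sum_ite_eq' Finset.univ j (fun _ => S)).trans (if_pos (Finset.mem_univ j))
    rw [h1, hS, Finset.sum_filter, ← Finset.sum_add_distrib]
    exact (Finset.sum_congr rfl fun i _ => by by_cases h : p.2 i = 0 <;> simp [h]).symm


lemma Mset_isClosed (hk : 0 < k) (C : Fin k → Set E)
    (hne : ∀ i, (C i).Nonempty) (hcl : ∀ i, IsClosed (C i)) (hcv : ∀ i, Convex ℝ (C i))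
    (hrec : ∀ i j, recCone (C i) = recCone (C j)) :
    IsClosed (Mset C) := by
  classical
  set i0 : Fin k := ⟨0, hk⟩
  -- the lineality space
  set L : Submodule ℝ E :=
    { carrier := {d | d ∈ recCone (C i0) ∧ -d ∈ recCone (C i0)}
      add_mem' := fun ha hb => ⟨recCone.add_mem ha.1 hb.1,
        by rw [neg_add]; exact recCone.add_mem ha.2 hb.2⟩
      zero_mem' := ⟨recCone.zero_mem, by rw [neg_zero]; exact recCone.zero_mem⟩
      smul_mem' := by
        intro t d hd
        rcases le_or_gt 0 t with ht | ht
        · exact ⟨recCone.smul_mem hd.1 ht, by rw [← smul_neg]; exact recCone.smul_mem hd.2 ht⟩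
        · constructor
          · have h1 : t • d = (-t) • (-d) := by rw [neg_smul, smul_neg, neg_neg]
            rw [h1]; exact recCone.smul_mem hd.2 (by linarith)
          · have h2 : -(t • d) = (-t) • d := by rw [neg_smul]
            rw [h2]; exact recCone.smul_mem hd.1 (by linarith) } with hLdef
  have hLrec : ∀ (i : Fin k), ∀ d ∈ L, d ∈ recCone (C i) ∧ -d ∈ recCone (C i) := by
    intro i d hd
    have := hrec i0 i
    exact ⟨this ▸ hd.1, this ▸ hd.2⟩
  obtain ⟨M, hM⟩ := Submodule.exists_isCompl L
  set π : E →ₗ[ℝ] E := M.subtype ∘ₗ (M.linearProjOfIsCompl L hM.symm) with hπ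
  have hπM : ∀ x : E, π x ∈ M := fun x => (M.linearProjOfIsCompl L hM.symm x).2
  have hπsub : ∀ x : E, x - π x ∈ L := by
    intro x
    have h := Submodule.projection_add_projection_eq_self hM x
    have : x - π x = (L.linearProjOfIsCompl M hM x : E) := by
      rw [hπ]; simp only [LinearMap.coe_comp, Function.comp_apply, Submodule.coe_subtype]
      exact sub_eq_iff_eq_add.2 h.symm
    rw [this]; exact (L.linearProjOfIsCompl M hM x).2
  have hπC : ∀ i, ∀ x ∈ C i, π x ∈ C i := by
    intro i x hxi
    have hl := hπsub x
    have : π x = x + (-(x - π x)) := by abel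
    rw [this]
    exact add_mem_of_recCone hxi ((hLrec i _ hl).2)
  -- the projected family
  set C' : Fin k → Set E := fun i => C i ∩ (M : Set E) with hC'
  have hC'ne : ∀ i, (C' i).Nonempty := by
    intro i
    obtain ⟨x, hxi⟩ := hne i
    exact ⟨π x, hπC i x hxi, hπM x⟩
  have hC'cl : ∀ i, IsClosed (C' i) := fun i =>
    (hcl i).inter M.closed_of_finiteDimensional
  have hC'cv : ∀ i, Convex ℝ (C' i) := fun i => (hcv i).inter M.convex
  have hC'rec : ∀ i, recCone (C' i) = recCone (C i) ∩ (M : Set E) := by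
    intro i
    apply Subset.antisymm
    · intro d hd
      obtain ⟨x, hxC, hxM⟩ := hC'ne i
      constructor
      · exact recCone.of_witness (hcl i) (hcv i) hxC
          (fun t ht => (hd x ⟨hxC, hxM⟩ t ht).1)
      · have h1 : x + (1:ℝ) • d ∈ M := (hd x ⟨hxC, hxM⟩ 1 zero_le_one).2
        rw [one_smul] at h1
        have : d = (x + d) - x := by abel
        rw [this]
        exact Submodule.sub_mem M h1 hxM
    · rintro d ⟨hd1, hd2⟩ x ⟨hxC, hxM⟩ t ht
      exact ⟨hd1 x hxC t ht, Submodule.add_mem M hxM (Submodule.smul_mem M t hd2)⟩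
  have hC'rec2 : ∀ i j, recCone (C' i) = recCone (C' j) := by
    intro i j; rw [hC'rec i, hC'rec j, hrec i j]
  have HptC' : ∀ u : Fin k → E, (∀ i, u i ∈ recCone (C' i)) → ∑ i, u i = 0 → u = 0 := by
    intro u hu husum
    funext i
    have hui := (hC'rec i) ▸ hu i
    have huiM : u i ∈ M := hui.2
    have huiD : u i ∈ recCone (C i0) := (hrec i i0) ▸ hui.1
    have hnegD : -u i ∈ recCone (C i0) := by
      have hsum : ∑ j ∈ Finset.univ.erase i, u j = -u i := by
        have := Finset.add_sum_erase Finset.univ u (Finset.mem_univ i)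
        rw [husum] at this
        exact (neg_eq_of_add_eq_zero_right this).symm
      rw [← hsum]
      apply recCone.sum_mem
      intro j hj
      have := (hC'rec j) ▸ hu j
      exact (hrec j i0) ▸ this.1
    have huiL : u i ∈ L := ⟨huiD, hnegD⟩
    have := hM.disjoint
    rw [Submodule.disjoint_def] at this
    exact this (u i) huiL huiM
  -- reduction
  have hkey : Mset C = (fun p : E × (Fin k → ℝ) => (π p.1, p.2)) ⁻¹' (Mset C') := by
    ext ⟨x, lam⟩
    constructor
    · rintro ⟨h0, h1, c, hc, hrep⟩
      dsimp only at h0 h1 hrep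
      refine ⟨h0, h1, fun i => π (c i), fun i => ⟨hπC i _ (hc i), hπM _⟩, ?_⟩
      show π x = _
      rw [hrep, map_sum]
      exact Finset.sum_congr rfl fun i _ => by rw [map_smul]
    · rintro ⟨h0, h1, c, hc, hrep⟩
      dsimp only at h0 h1 hrep
      have hj : ∃ j, lam j ≠ 0 := by
        by_contra hno
        push_neg at hno
        rw [Finset.sum_congr rfl fun i _ => hno i] at h1
        simp at h1
      obtain ⟨j, hj⟩ := hj
      set l : E := x - π x with hl
      refine ⟨h0, h1, fun i => c i + if i = j then (lam j)⁻¹ • l else 0, fun i => ?_, ?_⟩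
      · beta_reduce
        by_cases hij : i = j
        · subst hij
          rw [if_pos rfl]
          apply add_mem_of_recCone (hc i).1
          exact (hLrec i _ (Submodule.smul_mem L (lam i)⁻¹ (hπsub x))).1
        · rw [if_neg hij, add_zero]; exact (hc i).1
      · show x = _
        have heq : ∀ i, lam i • (c i + if i = j then (lam j)⁻¹ • l else 0) =
            lam i • c i + (if i = j then lam i • (lam j)⁻¹ • l else 0) := by
          intro i
          rw [smul_add]
          congr 1
          by_cases hij : i = j <;> simp [hij]
        rw [Finset.sum_congr rfl fun i _ => heq i, Finset.sum_add_distrib]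
        have h2 : ∑ i, (if i = j then lam i • (lam j)⁻¹ • l else 0 : E) = l := by
          rw [Finset.sum_ite_eq' Finset.univ j]
          rw [if_pos (Finset.mem_univ j), smul_smul, mul_inv_cancel₀ hj, one_smul]
        rw [h2]
        have hrep' : ∑ i, lam i • c i = π x := hrep.symm
        rw [hrep', hl]
        abel
  rw [hkey]
  have hcont : Continuous (fun p : E × (Fin k → ℝ) => (π p.1, p.2)) :=
    ((π.continuous_of_finiteDimensional).comp continuous_fst).prodMk continuous_snd
  exact (Mset_isClosed_pointed C' hC'ne hC'cl hC'cv hC'rec2 HptC').preimage hcont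


section Helpers
variable {E : Type*} [AddCommGroup E] [Module ℝ E] {k : ℕ}

lemma sum_single_smul (i0 : Fin k) (c : Fin k → E) :
    ∑ i, (Pi.single i0 1 : Fin k → ℝ) i • c i = c i0 := by
  rw [Finset.sum_eq_single i0]
  · simp
  · intro j _ hj
    simp [Pi.single_apply, hj]
  · simp

lemma sum_single_one (i0 : Fin k) : ∑ i, (Pi.single i0 1 : Fin k → ℝ) i = 1 := by
  rw [Finset.sum_eq_single i0]
  · simp
  · intro j _ hj
    simp [Pi.single_apply, hj]
  · simp

lemma single_nonneg' (i0 i : Fin k) : 0 ≤ (Pi.single i0 1 : Fin k → ℝ) i := by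
  rw [Pi.single_apply]; split <;> norm_num

lemma single_mem_Mset {C : Fin k → Set E} (hne : ∀ i, (C i).Nonempty) {i0 : Fin k} {x : E}
    (hx : x ∈ C i0) : ((x, Pi.single i0 1) : E × (Fin k → ℝ)) ∈ Mset C := by
  classical
  refine ⟨fun i => single_nonneg' i0 i, sum_single_one i0,
    fun j => if h : j = i0 then x else (hne j).some, fun j => ?_, ?_⟩
  · by_cases h : j = i0
    · subst h; simpa using hx
    · simpa [h] using (hne j).some_mem
  · show x = _
    rw [Finset.sum_eq_single i0]
    · simp
    · intro j _ hj
      show (Pi.single i0 1 : Fin k → ℝ) j • _ = (0:E)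
      simp [Pi.single_apply, hj]
    · simp
end Helpers


theorem stmt4 {n k : ℕ} (hk : 0 < k) (C : Fin k → Set (Fin n → ℝ))
    (hC : Admissible C) :
    IsClosed (CayleyQ C) ∧ Convex ℝ (CayleyQ C) ∧
      recCone (CayleyQ C) = {p | p.1 ∈ recCone (C ⟨0, hk⟩) ∧ p.2 = 0} := by
  classical
  obtain ⟨hne, hcl, hcv, hrec⟩ := hC
  have hQ : CayleyQ C = Mset C :=
    Subset.antisymm (hull_subset_Mset C hcv hne) (Mset_subset_hull C)
  set i0 : Fin k := ⟨0, hk⟩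
  refine ⟨?_, ?_, ?_⟩
  · rw [hQ]; exact Mset_isClosed hk C hne hcl hcv hrec
  · exact convex_convexHull ℝ _
  · rw [hQ]
    ext ⟨d, mu⟩
    simp only [mem_setOf_eq]
    constructor
    · intro hd
      obtain ⟨x0, hx0⟩ := hne i0
      have hp0 : ((x0, Pi.single i0 1) : (Fin n → ℝ) × (Fin k → ℝ)) ∈ Mset C :=
        single_mem_Mset hne hx0
      have hnn : ∀ i, 0 ≤ mu i := by
        intro i
        by_contra hneg
        push_neg at hneg
        have hmune : mu i ≠ 0 := ne_of_lt hneg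
        set t : ℝ := ((Pi.single i0 1 : Fin k → ℝ) i + 1) / (-mu i) with htdef
        have htnn : 0 ≤ t := by
          apply div_nonneg
          · have := single_nonneg' i0 i; linarith
          · linarith
        have hmem := hd _ hp0 t htnn
        have h := hmem.1 i
        have hcomp : ((x0, Pi.single i0 1) + t • ((d, mu) : (Fin n → ℝ) × (Fin k → ℝ))).2 i =
            (Pi.single i0 1 : Fin k → ℝ) i + t * mu i := rfl
        rw [hcomp] at h
        have htmu : t * mu i = -((Pi.single i0 1 : Fin k → ℝ) i + 1) := by
          rw [htdef, div_mul_eq_mul_div, div_eq_iff (neg_ne_zero.mpr hmune)]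
          ring
        rw [htmu] at h
        linarith
      have hsum0 : ∑ i, mu i = 0 := by
        have hmem := hd _ hp0 1 zero_le_one
        have h1 := hmem.2.1
        have hcomp : ∀ i, ((x0, Pi.single i0 1) + (1:ℝ) • ((d, mu) : (Fin n → ℝ) × (Fin k → ℝ))).2 i =
            (Pi.single i0 1 : Fin k → ℝ) i + mu i := by
          intro i
          show (Pi.single i0 1 : Fin k → ℝ) i + (1:ℝ) * mu i = _
          rw [one_mul]
        rw [Finset.sum_congr rfl fun i _ => hcomp i, Finset.sum_add_distrib,
          sum_single_one i0] at h1
        linarith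
      have hmu0 : mu = 0 := by
        funext i
        exact (Finset.sum_eq_zero_iff_of_nonneg fun i _ => hnn i).1 hsum0 i (Finset.mem_univ i)
      refine ⟨?_, hmu0⟩
      intro y hy t ht
      have hpy : ((y, Pi.single i0 1) : (Fin n → ℝ) × (Fin k → ℝ)) ∈ Mset C :=
        single_mem_Mset hne hy
      have hm := hd _ hpy t ht
      rw [hmu0] at hm
      have hcomp : ((y, Pi.single i0 1) : (Fin n → ℝ) × (Fin k → ℝ)) + t • (d, (0 : Fin k → ℝ)) =
          (y + t • d, Pi.single i0 1) := by
        rw [Prod.smul_mk, smul_zero, Prod.mk_add_mk, add_zero]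
      rw [hcomp] at hm
      obtain ⟨_, _, c, hc, hrep⟩ := hm
      dsimp only at hrep
      rw [hrep, sum_single_smul i0 c]
      exact hc i0
    · rintro ⟨hdrec, hmu0⟩
      subst hmu0
      intro p hp t ht
      obtain ⟨h0, h1, c, hc, hrep⟩ := hp
      have hcomp : p + t • ((d, (0 : Fin k → ℝ)) : (Fin n → ℝ) × (Fin k → ℝ)) =
          (p.1 + t • d, p.2) := by
        have h' : t • ((d, (0 : Fin k → ℝ)) : (Fin n → ℝ) × (Fin k → ℝ)) = (t • d, 0) := by
          rw [Prod.smul_mk, smul_zero]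
        rw [h']
        exact Prod.ext rfl (add_zero p.2)
      rw [hcomp]
      refine ⟨h0, h1, fun i => c i + t • d, fun i => ?_, ?_⟩
      · exact (hrec i0 i ▸ hdrec) (c i) (hc i) t ht
      · show p.1 + t • d = ∑ i, p.2 i • (c i + t • d)
        rw [Finset.sum_congr rfl fun i _ => smul_add (p.2 i) (c i) (t • d),
          Finset.sum_add_distrib, ← hrep, ← Finset.sum_smul, h1, one_smul]
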